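/- Let k be a field of characteristic zero and Δ a finite-dimensional commutative k-algebra. If δ_1, δ_2 ∈ Δ have minimal polynomials μ_{δ_1}, μ_{δ_2} that are both inseparable, and deg μ_{δ_1} · deg μ_{δ_2} = dim_k k[δ_1, δ_2], then the subalgebra k[δ_1, δ_2] is not generated by a single element over k. -/

import Mathlib

open Polynomial TrivSqZeroExt TensorProduct

lemma aux_aeval_dual {k K : Type*} [CommRing k] [CommRing K] [Algebra k K]
    (a c : K) (p : k[X]) :
    aeval (inl a + (inr c : DualNumber K)) p
      = inl (aeval a p) + inr (c * aeval a (derivative p)) := by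
  induction p using Polynomial.induction_on with
  | C r => simp [TrivSqZeroExt.algebraMap_eq_inl']
  | add p q hp hq =>
      simp only [map_add, hp, hq, derivative_add, mul_add, inl_add, inr_add]
      abel
  | monomial n r h =>
      have e : (C r : k[X]) * X ^ (n + 1) = (C r * X ^ n) * X := by ring
      rw [e, map_mul, h, aeval_X]
      ext
      · simp [fst_mul]
      · simp only [snd_mul, fst_mul, fst_add, snd_add, fst_inl, snd_inl, fst_inr, snd_inr,
          derivative_mul, derivative_X, map_add, map_mul, aeval_X, mul_one, add_zero, zero_add,
          smul_eq_mul, op_smul_eq_smul]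
        ring

lemma aux_exists_repeated_root {k : Type*} [Field k] {p : k[X]} (hp : p ≠ 0)
    (hsep : ¬ p.Separable) :
    ∃ α : AlgebraicClosure k, aeval α p = 0 ∧ aeval α (derivative p) = 0 := by
  classical
  set d := EuclideanDomain.gcd p (derivative p) with hd
  have hdvd1 : d ∣ p := EuclideanDomain.gcd_dvd_left _ _
  have hdvd2 : d ∣ derivative p := EuclideanDomain.gcd_dvd_right _ _
  have hdu : ¬ IsUnit d := fun h => hsep ((EuclideanDomain.gcd_isUnit_iff).mp h)
  have hd0 : d ≠ 0 := by
    intro h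
    exact hp (by simpa [h] using hdvd1)
  have hdeg : d.degree ≠ 0 := (degree_pos_of_ne_zero_of_nonunit hd0 hdu).ne'
  obtain ⟨α, hα⟩ := IsAlgClosed.exists_aeval_eq_zero (AlgebraicClosure k) d hdeg
  obtain ⟨e, he⟩ := hdvd1
  obtain ⟨f, hf⟩ := hdvd2
  exact ⟨α, by rw [he, map_mul, hα, zero_mul], by rw [hf, map_mul, hα, zero_mul]⟩

lemma aux_dual_mul {K : Type*} [CommRing K] (x y u v : K) :
    (inl x + inr u) * (inl y + (inr v : DualNumber K)) = inl (x * y) + inr (x * v + y * u) := by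
  ext
  · simp [fst_mul]
  · simp [snd_mul, fst_mul, smul_eq_mul, op_smul_eq_smul, mul_comm]

lemma aux_not_monogenic {k : Type*} [Field k] {μ₁ μ₂ : k[X]} (h1 : μ₁ ≠ 0) (h2 : μ₂ ≠ 0)
    (hs1 : ¬ μ₁.Separable) (hs2 : ¬ μ₂.Separable)
    (b : AdjoinRoot μ₁ ⊗[k] AdjoinRoot μ₂) :
    Algebra.adjoin k {b} ≠ ⊤ := by
  intro hb
  set K := AlgebraicClosure k
  obtain ⟨α, hα1, hα2⟩ := aux_exists_repeated_root h1 hs1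
  obtain ⟨β, hβ1, hβ2⟩ := aux_exists_repeated_root h2 hs2
  -- the family of algebra maps
  have key : ∀ c : K, aeval (inl α + (inr c : DualNumber K)) μ₁ = 0 := fun c => by
    rw [aux_aeval_dual, hα1, hα2, mul_zero]; simp
  have key' : ∀ c : K, aeval (inl β + (inr c : DualNumber K)) μ₂ = 0 := fun c => by
    rw [aux_aeval_dual, hβ1, hβ2, mul_zero]; simp
  let ψ₁ : K → (AdjoinRoot μ₁ →ₐ[k] DualNumber K) :=
    fun c => AdjoinRoot.liftAlgHom μ₁ (Algebra.ofId k _) (inl α + inr c) (key c)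
  let ψ₂ : K → (AdjoinRoot μ₂ →ₐ[k] DualNumber K) :=
    fun c => AdjoinRoot.liftAlgHom μ₂ (Algebra.ofId k _) (inl β + inr c) (key' c)
  let Ψ : K → K → (AdjoinRoot μ₁ ⊗[k] AdjoinRoot μ₂ →ₐ[k] DualNumber K) :=
    fun c₁ c₂ => Algebra.TensorProduct.lift (ψ₁ c₁) (ψ₂ c₂) (fun x y => Commute.all _ _)
  -- linearity of the family in (c₁, c₂)
  have lin : ∀ (x : AdjoinRoot μ₁ ⊗[k] AdjoinRoot μ₂) (c₁ c₂ : K),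
      Ψ c₁ c₂ x = inl (fst (Ψ 0 0 x)) + inr (c₁ * snd (Ψ 1 0 x) + c₂ * snd (Ψ 0 1 x)) := by
    intro x
    induction x using TensorProduct.induction_on with
    | zero => intro c₁ c₂; simp
    | tmul x y =>
        intro c₁ c₂
        obtain ⟨p, rfl⟩ := AdjoinRoot.mk_surjective x
        obtain ⟨q, rfl⟩ := AdjoinRoot.mk_surjective y
        have hev : ∀ (c : K) (p : k[X]), (ψ₁ c) (AdjoinRoot.mk μ₁ p)
            = inl (aeval α p) + inr (c * aeval α (derivative p)) := by
          intro c p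
          show AdjoinRoot.liftAlgHom μ₁ (Algebra.ofId k _) (inl α + inr c) (key c) (AdjoinRoot.mk μ₁ p) = _
          exact aux_aeval_dual _ _ _
        have hev' : ∀ (c : K) (q : k[X]), (ψ₂ c) (AdjoinRoot.mk μ₂ q)
            = inl (aeval β q) + inr (c * aeval β (derivative q)) := by
          intro c q
          show AdjoinRoot.liftAlgHom μ₂ (Algebra.ofId k _) (inl β + inr c) (key' c) (AdjoinRoot.mk μ₂ q) = _
          exact aux_aeval_dual _ _ _
        have hΨ : ∀ c₁ c₂ : K, Ψ c₁ c₂ (AdjoinRoot.mk μ₁ p ⊗ₜ[k] AdjoinRoot.mk μ₂ q)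
            = inl (aeval α p * aeval β q)
              + inr (aeval α p * (c₂ * aeval β (derivative q))
                  + aeval β q * (c₁ * aeval α (derivative p))) := by
          intro c₁ c₂
          rw [show Ψ c₁ c₂ (AdjoinRoot.mk μ₁ p ⊗ₜ[k] AdjoinRoot.mk μ₂ q)
              = (ψ₁ c₁) (AdjoinRoot.mk μ₁ p) * (ψ₂ c₂) (AdjoinRoot.mk μ₂ q) from
              Algebra.TensorProduct.lift_tmul _ _ _ _ _, hev, hev', aux_dual_mul]
        rw [hΨ, hΨ, hΨ, hΨ]
        simp only [fst_add, snd_add, fst_inl, snd_inl, fst_inr, snd_inr, zero_add, add_zero,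
          one_mul, zero_mul, mul_zero]
        congr 1
        congr 1
        ring
    | add x y hx hy =>
        intro c₁ c₂
        rw [map_add, hx _ _, hy _ _, map_add (Ψ 0 0), map_add (Ψ 1 0), map_add (Ψ 0 1)]
        simp only [fst_add, snd_add, mul_add, inl_add, inr_add]
        ext <;> simp <;> ring
  -- choose a nonzero direction killing the generator
  set s₁ := snd (Ψ 1 0 b)
  set s₂ := snd (Ψ 0 1 b)
  obtain ⟨c₁, c₂, hc, hker⟩ : ∃ c₁ c₂ : K, ¬(c₁ = 0 ∧ c₂ = 0) ∧ c₁ * s₁ + c₂ * s₂ = 0 := by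
    by_cases h : s₁ = 0 ∧ s₂ = 0
    · exact ⟨1, 0, by simp, by simp [h.1, h.2]⟩
    · exact ⟨s₂, -s₁, fun h' => h ⟨by simpa using h'.2, h'.1⟩, by ring⟩
  have hΨb : Ψ c₁ c₂ b = Ψ 0 0 b := by
    rw [lin b, lin b, hker]
    simp only [zero_mul, add_zero, fst_add, fst_inl, fst_inr]
  have hΨeq : Ψ c₁ c₂ = Ψ 0 0 := by
    have hle : Algebra.adjoin k {b} ≤ AlgHom.equalizer (Ψ c₁ c₂) (Ψ 0 0) :=
      Algebra.adjoin_le (by simpa [AlgHom.mem_equalizer] using hΨb)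
    rw [hb, top_le_iff] at hle
    exact AlgHom.ext fun x => (AlgHom.mem_equalizer _ _ x).mp (hle ▸ Algebra.mem_top)
  have e₁ : c₁ = 0 := by
    have := congrArg (fun f => snd (f (AdjoinRoot.root μ₁ ⊗ₜ[k] (1 : AdjoinRoot μ₂)))) hΨeq
    simpa [Ψ, ψ₁, Algebra.TensorProduct.lift_tmul] using this
  have e₂ : c₂ = 0 := by
    have := congrArg (fun f => snd (f ((1 : AdjoinRoot μ₁) ⊗ₜ[k] AdjoinRoot.root μ₂))) hΨeq
    simpa [Ψ, ψ₂, Algebra.TensorProduct.lift_tmul] using this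
  exact hc ⟨e₁, e₂⟩

theorem stmt_11 (k Δ : Type*) [Field k] [CharZero k] [CommRing Δ] [Algebra k Δ]
    [FiniteDimensional k Δ] (δ₁ δ₂ : Δ)
    (h₁ : ¬ (minpoly k δ₁).Separable) (h₂ : ¬ (minpoly k δ₂).Separable)
    (hdim : (minpoly k δ₁).natDegree * (minpoly k δ₂).natDegree
      = Module.finrank k ↥(Algebra.adjoin k {δ₁, δ₂})) :
    ¬ ∃ g : Δ, Algebra.adjoin k {g} = Algebra.adjoin k {δ₁, δ₂} := by
  rintro ⟨g, hg⟩
  have hint : Algebra.IsIntegral k Δ := Algebra.IsIntegral.of_finite k Δ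
  have h10 : minpoly k δ₁ ≠ 0 := minpoly.ne_zero (hint.isIntegral δ₁)
  have h20 : minpoly k δ₂ ≠ 0 := minpoly.ne_zero (hint.isIntegral δ₂)
  set A := Algebra.adjoin k {δ₁, δ₂} with hA
  let f₁ : AdjoinRoot (minpoly k δ₁) →ₐ[k] Δ :=
    AdjoinRoot.liftAlgHom _ (Algebra.ofId k Δ) δ₁ (minpoly.aeval k δ₁)
  let f₂ : AdjoinRoot (minpoly k δ₂) →ₐ[k] Δ :=
    AdjoinRoot.liftAlgHom _ (Algebra.ofId k Δ) δ₂ (minpoly.aeval k δ₂)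
  let θ : AdjoinRoot (minpoly k δ₁) ⊗[k] AdjoinRoot (minpoly k δ₂) →ₐ[k] Δ :=
    Algebra.TensorProduct.lift f₁ f₂ (fun x y => Commute.all _ _)
  have hθ₁ : θ (AdjoinRoot.root _ ⊗ₜ[k] 1) = δ₁ := by
    rw [Algebra.TensorProduct.lift_tmul, map_one, mul_one]
    exact AdjoinRoot.liftAlgHom_root _ _ _ _
  have hθ₂ : θ (1 ⊗ₜ[k] AdjoinRoot.root _) = δ₂ := by
    rw [Algebra.TensorProduct.lift_tmul, map_one, one_mul]
    exact AdjoinRoot.liftAlgHom_root _ _ _ _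
  -- range of θ is A
  have hrange : θ.range = A := by
    apply le_antisymm
    · rintro _ ⟨x, rfl⟩
      show θ x ∈ A
      induction x using TensorProduct.induction_on with
      | zero => exact Subalgebra.zero_mem _
      | tmul x y =>
          obtain ⟨p, rfl⟩ := AdjoinRoot.mk_surjective x
          obtain ⟨q, rfl⟩ := AdjoinRoot.mk_surjective y
          rw [show θ (AdjoinRoot.mk _ p ⊗ₜ[k] AdjoinRoot.mk _ q)
              = f₁ (AdjoinRoot.mk _ p) * f₂ (AdjoinRoot.mk _ q) from
              Algebra.TensorProduct.lift_tmul _ _ _ _ _]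
          have e1 : f₁ (AdjoinRoot.mk _ p) = aeval δ₁ p := AdjoinRoot.liftAlgHom_mk _ _ _ _ _
          have e2 : f₂ (AdjoinRoot.mk _ q) = aeval δ₂ q := AdjoinRoot.liftAlgHom_mk _ _ _ _ _
          rw [e1, e2]
          exact mul_mem
            (Algebra.adjoin_mono (Set.singleton_subset_iff.mpr (by simp))
              (Polynomial.aeval_mem_adjoin_singleton k δ₁))
            (Algebra.adjoin_mono (Set.singleton_subset_iff.mpr (by simp))
              (Polynomial.aeval_mem_adjoin_singleton k δ₂))
      | add x y hx hy => rw [map_add]; exact Subalgebra.add_mem _ hx hy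
    · apply Algebra.adjoin_le
      rintro x (rfl | rfl)
      · exact ⟨_, hθ₁⟩
      · exact ⟨_, hθ₂⟩
  -- dimension count: θ is injective
  haveI : FiniteDimensional k (AdjoinRoot (minpoly k δ₁)) :=
    Module.Finite.of_basis (AdjoinRoot.powerBasis h10).basis
  haveI : FiniteDimensional k (AdjoinRoot (minpoly k δ₂)) :=
    Module.Finite.of_basis (AdjoinRoot.powerBasis h20).basis
  have hrk : Module.finrank k (AdjoinRoot (minpoly k δ₁) ⊗[k] AdjoinRoot (minpoly k δ₂))
      = (minpoly k δ₁).natDegree * (minpoly k δ₂).natDegree := by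
    rw [Module.finrank_tensorProduct, (AdjoinRoot.powerBasis h10).finrank,
      (AdjoinRoot.powerBasis h20).finrank, AdjoinRoot.powerBasis_dim, AdjoinRoot.powerBasis_dim]
  let θ' : AdjoinRoot (minpoly k δ₁) ⊗[k] AdjoinRoot (minpoly k δ₂) →ₗ[k] A :=
    (θ.toLinearMap).codRestrict (Subalgebra.toSubmodule A) (fun x => by
      rw [Subalgebra.mem_toSubmodule, ← hrange]; exact ⟨x, rfl⟩)
  have hsurj : Function.Surjective θ' := by
    rintro ⟨a, ha⟩
    rw [← hrange] at ha
    obtain ⟨x, hx⟩ := ha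
    exact ⟨x, Subtype.ext hx⟩
  have hinj' : Function.Injective θ' :=
    (LinearMap.injective_iff_surjective_of_finrank_eq_finrank (by rw [hrk, hdim])).mpr hsurj
  have hinj : Function.Injective θ := fun x y hxy => hinj' (Subtype.ext hxy)
  -- pull back the generator
  have hgA : g ∈ A := hg ▸ Algebra.self_mem_adjoin_singleton k g
  rw [← hrange] at hgA
  obtain ⟨x, hx⟩ := hgA
  have hx' : θ x = g := hx
  have hadj : Algebra.adjoin k {x} = ⊤ := by
    apply Subalgebra.map_injective hinj
    rw [AlgHom.map_adjoin, Set.image_singleton, hx', Algebra.map_top, hrange, hg]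
  exact aux_not_monogenic h10 h20 h₁ h₂ x hadj
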